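/- Let n ≥ 1 and let · be a quasigroup operation of order n on Fin n, and let σ be a complete mapping of (Fin n, ·). Then the Bruck–Belousov prolongation ∗ of (Fin n, ·) along σ is a quasigroup operation of order n+1 on Fin (n+1); that is, for every a ∈ Fin (n+1) the maps x ↦ a∗x and x ↦ x∗a are bijections of Fin (n+1). -/
import Mathlib


/-- A binary operation on `Fin m` is a quasigroup operation if all left and
right translations are bijections. -/
def IsQuasigroup {m : ℕ} (f : Fin m → Fin m → Fin m) : Prop :=
  ∀ a : Fin m, Function.Bijective (fun x => f a x) ∧ Function.Bijective (fun x => f x a)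

/-- **Bruck–Belousov prolongation.**  Let `f` be a quasigroup operation of order
`n ≥ 1` on `Fin n` and `σ` a complete mapping of `(Fin n, f)` (i.e. `x ↦ f x (σ x)`
is a bijection).  Then the Bruck–Belousov prolongation `star` of `f` along `σ`
(characterized cell-by-cell by `h1`–`h5`, with `Fin n` identified with the first
`n` elements of `Fin (n+1)` and `e = Fin.last n`) is a quasigroup operation of
order `n+1` on `Fin (n+1)`. -/
theorem bruck_belousov_prolongation_isQuasigroup
    (n : ℕ) (hn : 1 ≤ n)
    (f : Fin n → Fin n → Fin n) (hf : IsQuasigroup f)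
    (σ : Equiv.Perm (Fin n))
    (hσ : Function.Bijective (fun x => f x (σ x)))
    (star : Fin (n + 1) → Fin (n + 1) → Fin (n + 1))
    (h1 : ∀ x y : Fin n, y ≠ σ x →
      star x.castSucc y.castSucc = (f x y).castSucc)
    (h2 : ∀ x : Fin n, star x.castSucc (σ x).castSucc = Fin.last n)
    (h3 : ∀ x : Fin n, star x.castSucc (Fin.last n) = (f x (σ x)).castSucc)
    (h4 : ∀ x : Fin n, star (Fin.last n) (σ x).castSucc = (f x (σ x)).castSucc)
    (h5 : star (Fin.last n) (Fin.last n) = Fin.last n) :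
    IsQuasigroup star := by
  intro a
  constructor
  · apply Finite.surjective_iff_bijective.mp
    intro z
    rcases Fin.eq_castSucc_or_eq_last a with ⟨a', rfl⟩ | rfl
    · rcases Fin.eq_castSucc_or_eq_last z with ⟨c, rfl⟩ | rfl
      · by_cases hc : c = f a' (σ a')
        · exact ⟨Fin.last n, by simp [h3, hc]⟩
        · obtain ⟨y, hy⟩ := (hf a').1.2 c
          simp only at hy
          have hy' : y ≠ σ a' := by rintro rfl; exact hc hy.symm
          exact ⟨y.castSucc, by simp [h1 a' y hy', hy]⟩
      · exact ⟨(σ a').castSucc, h2 a'⟩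
    · rcases Fin.eq_castSucc_or_eq_last z with ⟨c, rfl⟩ | rfl
      · obtain ⟨x, hx⟩ := hσ.2 c
        simp only at hx
        exact ⟨(σ x).castSucc, by simp [h4, hx]⟩
      · exact ⟨Fin.last n, h5⟩
  · apply Finite.surjective_iff_bijective.mp
    intro z
    rcases Fin.eq_castSucc_or_eq_last a with ⟨a', rfl⟩ | rfl
    · rcases Fin.eq_castSucc_or_eq_last z with ⟨c, rfl⟩ | rfl
      · by_cases hc : c = f (σ.symm a') a'
        · refine ⟨Fin.last n, ?_⟩
          have := h4 (σ.symm a')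
          rw [σ.apply_symm_apply] at this
          simp [this, hc]
        · obtain ⟨x, hx⟩ := (hf a').2.2 c
          simp only at hx
          have hx' : a' ≠ σ x := by
            intro h
            apply hc
            have : x = σ.symm a' := by rw [h, σ.symm_apply_apply]
            rw [← this, ← hx]
          exact ⟨x.castSucc, by simp [h1 x a' hx', hx]⟩
      · refine ⟨(σ.symm a').castSucc, ?_⟩
        have := h2 (σ.symm a')
        rwa [σ.apply_symm_apply] at this
    · rcases Fin.eq_castSucc_or_eq_last z with ⟨c, rfl⟩ | rfl
      · obtain ⟨x, hx⟩ := hσ.2 c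
        simp only at hx
        exact ⟨x.castSucc, by simp [h3, hx]⟩
      · exact ⟨Fin.last n, h5⟩
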